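/- Correctness of the integer programming formulation of StableConfigs for finite TBNs: let T : Fin m → ℕ be a TBN with starred sites limiting, let L = {j : Fin m | ∃ i, A i j < 0} be the set of limiting monomer types, and let B = ∑_{j ∈ L} T j. Then the minimum over all saturated configurations γ of T of the number of merges m(γ) equals the minimum, over all families Count : Fin B → (Fin m → ℕ) satisfying (i) each Count k is self-saturated, (ii) ∑_k Count k j = T j for every j ∈ L, and (iii) ∑_k Count k j ≤ T j for every j ∉ L, of the objective ∑_k ((∑_j Count k j) − (if Count k ≠ 0 then 1 else 0)). -/

import Mathlib

/-- A polymer `p` (vector of monomer counts) is self-saturated if the net count of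
every unstarred site type is nonnegative, i.e. `A · p ≥ 0`. -/
def SelfSaturated {m n : ℕ} (A : Matrix (Fin n) (Fin m) ℤ) (p : Fin m → ℕ) : Prop :=
  ∀ i : Fin n, 0 ≤ A.mulVec (fun j => (p j : ℤ)) i

/-- A nonzero self-saturated polymer is unsplittable if it cannot be written as the sum
of two nonzero self-saturated polymers. -/
def Unsplittable {m n : ℕ} (A : Matrix (Fin n) (Fin m) ℤ) (p : Fin m → ℕ) : Prop :=
  p ≠ 0 ∧ SelfSaturated A p ∧
    ¬ ∃ q r : Fin m → ℕ, q ≠ 0 ∧ r ≠ 0 ∧ SelfSaturated A q ∧ SelfSaturated A r ∧ p = q + r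

/-- The number of merges of a configuration: the sum over its polymers of (size − 1). -/
def merges {m : ℕ} (γ : Multiset (Fin m → ℕ)) : ℕ :=
  (γ.map (fun P => (∑ j, P j) - 1)).sum

/-- The set of limiting monomer types of A. -/
def limiting {m n : ℕ} (A : Matrix (Fin n) (Fin m) ℤ) : Finset (Fin m) :=
  Finset.univ.filter (fun j => ∃ i : Fin n, A i j < 0)

lemma msum_apply {m : ℕ} (γ : Multiset (Fin m → ℕ)) (j : Fin m) :
    γ.sum j = (γ.map (fun P => P j)).sum := by
  induction γ using Multiset.induction with
  | empty => simp
  | cons a s ih => simp [ih]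

lemma swap_msum {m : ℕ} (γ : Multiset (Fin m → ℕ)) (s : Finset (Fin m)) :
    ∑ j ∈ s, (γ.map (fun P => P j)).sum = (γ.map (fun P => ∑ j ∈ s, P j)).sum := by
  induction γ using Multiset.induction with
  | empty => simp
  | cons a t ih => simp [Finset.sum_add_distrib, ih]

lemma selfsat_zero {m n : ℕ} (A : Matrix (Fin n) (Fin m) ℤ) : SelfSaturated A 0 := by
  intro i
  have h : (fun j => ((0 : Fin m → ℕ) j : ℤ)) = 0 := by funext j; simp
  rw [h, Matrix.mulVec_zero]; exact le_refl _

lemma selfsat_single {m n : ℕ} (A : Matrix (Fin n) (Fin m) ℤ) {j : Fin m}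
    (hj : j ∉ limiting A) : SelfSaturated A (Pi.single j 1) := by
  intro i
  simp only [limiting, Finset.mem_filter, Finset.mem_univ, true_and, not_exists, not_lt] at hj
  have h : A.mulVec (fun j' => ((Pi.single j 1 : Fin m → ℕ) j' : ℤ)) i = A i j := by
    rw [Matrix.mulVec, dotProduct]
    rw [Finset.sum_eq_single j]
    · simp
    · intro b _ hb; simp [Pi.single_apply, hb]
    · simp
  rw [h]; exact hj i

lemma obj_eq {m : ℕ} (P : Fin m → ℕ) :
    (∑ j, P j) - (if P ≠ 0 then 1 else 0) = (∑ j, P j) - 1 := by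
  by_cases h : P = 0
  · subst h; simp
  · simp [h]

lemma merges_add {m : ℕ} (a b : Multiset (Fin m → ℕ)) :
    merges (a + b) = merges a + merges b := by simp [merges]

lemma exists_config {m n : ℕ} (A : Matrix (Fin n) (Fin m) ℤ) (T : Fin m → ℕ)
    {B : ℕ} (Count : Fin B → Fin m → ℕ)
    (h1 : ∀ s, SelfSaturated A (Count s))
    (h2 : ∀ j ∈ limiting A, ∑ s, Count s j = T j)
    (h3 : ∀ j ∉ limiting A, ∑ s, Count s j ≤ T j) :
    ∃ γ : Multiset (Fin m → ℕ),
      (∀ P ∈ γ, P ≠ 0) ∧ γ.sum = T ∧ (∀ P ∈ γ, SelfSaturated A P) ∧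
      merges γ = ∑ s, ((∑ j, Count s j) - (if Count s ≠ 0 then 1 else 0)) := by
  classical
  set S : Fin m → ℕ := fun j => ∑ s, Count s j with hS
  have hST : ∀ j, S j ≤ T j := by
    intro j; by_cases hj : j ∈ limiting A
    · exact le_of_eq (h2 j hj)
    · exact h3 j hj
  set μ0 : Multiset (Fin m → ℕ) := Finset.univ.val.map Count with hμ0
  set μ : Multiset (Fin m → ℕ) := μ0.filter (fun P => P ≠ 0) with hμ
  set δ : Multiset (Fin m → ℕ) :=
    ∑ j : Fin m, Multiset.replicate (T j - S j) (Pi.single j 1) with hδ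
  have hδmem : ∀ P ∈ δ, ∃ j ∉ limiting A, P = Pi.single j 1 := by
    intro P hP
    rw [hδ, Multiset.mem_sum] at hP
    obtain ⟨j, -, hP⟩ := hP
    obtain ⟨hne, rfl⟩ := Multiset.mem_replicate.1 hP
    refine ⟨j, ?_, rfl⟩
    intro hj
    have hSj : S j = T j := h2 j hj
    omega
  refine ⟨μ + δ, ?_, ?_, ?_, ?_⟩
  · intro P hP
    rcases Multiset.mem_add.1 hP with h | h
    · exact (Multiset.mem_filter.1 h).2
    · obtain ⟨j, -, rfl⟩ := hδmem P h
      simp [Pi.single_eq_same, funext_iff]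
      exact ⟨j, by simp⟩
  · -- sum = T
    have hμsum : μ.sum = ∑ s, Count s := by
      have hsplit := Multiset.filter_add_not (fun P => P ≠ 0) μ0
      have hz : (μ0.filter (fun P => ¬ P ≠ 0)).sum = 0 := by
        apply Multiset.sum_eq_zero
        intro x hx
        have := (Multiset.mem_filter.1 hx).2
        simpa using this
      have : μ.sum + (μ0.filter (fun P => ¬ P ≠ 0)).sum = μ0.sum := by
        rw [← Multiset.sum_add, hsplit]
      rw [hz, add_zero] at this
      rw [this, hμ0, Finset.sum]
    have hδsum : δ.sum = ∑ j : Fin m, (T j - S j) • (Pi.single j 1 : Fin m → ℕ) := by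
      rw [hδ]
      induction (Finset.univ : Finset (Fin m)) using Finset.induction with
      | empty => simp
      | insert _ _ h ih => simp [Finset.sum_insert h, ih]
    rw [Multiset.sum_add, hμsum, hδsum]
    funext j'
    have e1 : (∑ s, Count s) j' = S j' := by rw [hS]; simp [Finset.sum_apply]
    have e2 : (∑ j : Fin m, (T j - S j) • (Pi.single j 1 : Fin m → ℕ)) j'
        = T j' - S j' := by
      rw [Finset.sum_apply]
      simp only [Pi.smul_apply, Pi.single_apply, smul_eq_mul, mul_ite, mul_one, mul_zero]
      simp
    simp only [Pi.add_apply, e1, e2]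
    have := hST j'
    omega
  · intro P hP
    rcases Multiset.mem_add.1 hP with h | h
    · obtain ⟨s, -, rfl⟩ := Multiset.mem_map.1 ((Multiset.mem_filter.1 h).1)
      exact h1 s
    · obtain ⟨j, hj, rfl⟩ := hδmem P h
      exact selfsat_single A hj
  · -- merges
    rw [merges_add]
    have hδm : merges δ = 0 := by
      rw [hδ]
      induction (Finset.univ : Finset (Fin m)) using Finset.induction with
      | empty => simp [merges]
      | insert _ _ h ih =>
          rw [Finset.sum_insert h, merges_add, ih, add_zero]
          simp [merges, Multiset.map_replicate, Multiset.sum_replicate,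
            Finset.sum_pi_single']
    rw [hδm, add_zero]
    have hμm : merges μ = merges μ0 := by
      have hsplit := Multiset.filter_add_not (fun P => P ≠ 0) μ0
      have hz : merges (μ0.filter (fun P => ¬ P ≠ 0)) = 0 := by
        apply Multiset.sum_eq_zero
        intro x hx
        obtain ⟨P, hP, rfl⟩ := Multiset.mem_map.1 hx
        have h0 : P = 0 := by simpa using (Multiset.mem_filter.1 hP).2
        subst h0; simp
      have : merges μ + merges (μ0.filter (fun P => ¬ P ≠ 0)) = merges μ0 := by
        rw [← merges_add, hsplit]
      omega
    rw [hμm, hμ0]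
    have : merges (Finset.univ.val.map Count)
        = ∑ s, ((∑ j, Count s j) - 1) := by
      rw [merges, Multiset.map_map, Finset.sum]
      rfl
    rw [this]
    exact (Finset.sum_congr rfl fun s _ => (obj_eq (Count s))).symm

lemma exists_count {m n : ℕ} (A : Matrix (Fin n) (Fin m) ℤ) (T : Fin m → ℕ)
    (γ : Multiset (Fin m → ℕ)) (hne : ∀ P ∈ γ, P ≠ 0) (hsum : γ.sum = T)
    (hsat : ∀ P ∈ γ, SelfSaturated A P) :
    ∃ Count : Fin (∑ j ∈ limiting A, T j) → Fin m → ℕ,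
      (∀ s, SelfSaturated A (Count s)) ∧
      (∀ j ∈ limiting A, (∑ s, Count s j) = T j) ∧
      (∀ j ∉ limiting A, (∑ s, Count s j) ≤ T j) ∧
      (∑ s, ((∑ j, Count s j) - (if Count s ≠ 0 then 1 else 0))) ≤ merges γ := by
  classical
  set B := ∑ j ∈ limiting A, T j with hB
  set p : (Fin m → ℕ) → Prop := fun P => ∃ j ∈ limiting A, P j ≠ 0 with hp
  set γL := γ.filter p with hγL
  set γN := γ.filter (fun P => ¬ p P) with hγN
  have hsplit : γL + γN = γ := Multiset.filter_add_not p γ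
  have hTj : ∀ j, T j = (γL.map (fun P => P j)).sum + (γN.map (fun P => P j)).sum := by
    intro j
    rw [← hsum, msum_apply, ← hsplit, Multiset.map_add, Multiset.sum_add]
  have hNj : ∀ j ∈ limiting A, (γN.map (fun P => P j)).sum = 0 := by
    intro j hj
    apply Multiset.sum_eq_zero
    intro x hx
    obtain ⟨P, hP, rfl⟩ := Multiset.mem_map.1 hx
    have hnp : ¬ p P := (Multiset.mem_filter.1 hP).2
    by_contra h
    exact hnp ⟨j, hj, h⟩
  have hLj : ∀ j ∈ limiting A, (γL.map (fun P => P j)).sum = T j := by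
    intro j hj
    rw [hTj j, hNj j hj, add_zero]
  have hLle : ∀ j, (γL.map (fun P => P j)).sum ≤ T j := by
    intro j; rw [hTj j]; exact Nat.le_add_right _ _
  have hcard : Multiset.card γL ≤ B := by
    calc Multiset.card γL = (γL.map (fun _ => (1:ℕ))).sum := by
            simp [Multiset.map_const', Multiset.sum_replicate]
      _ ≤ (γL.map (fun P => ∑ j ∈ limiting A, P j)).sum := by
            apply Multiset.sum_map_le_sum_map
            intro P hP
            obtain ⟨j, hj, hPj⟩ := (Multiset.mem_filter.1 hP).2
            exact le_trans (Nat.one_le_iff_ne_zero.2 hPj)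
              (Finset.single_le_sum (fun _ _ => Nat.zero_le _) hj)
      _ = ∑ j ∈ limiting A, (γL.map (fun P => P j)).sum := (swap_msum γL _).symm
      _ ≤ ∑ j ∈ limiting A, T j := Finset.sum_le_sum fun j _ => hLle j
  set l : List (Fin m → ℕ) := γL.toList ++ List.replicate (B - Multiset.card γL) 0
    with hl
  have hlen : l.length = B := by
    rw [hl]; simp [Multiset.length_toList]; omega
  set Count : Fin B → Fin m → ℕ := fun s => l.get (Fin.cast hlen.symm s) with hCount
  have hmem : ∀ s, Count s ∈ γ ∨ Count s = 0 := by
    intro s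
    have h : Count s ∈ γL.toList ++ List.replicate (B - Multiset.card γL) 0 :=
      List.get_mem l _
    rw [List.mem_append] at h
    rcases h with h | h
    · exact Or.inl (Multiset.mem_of_mem_filter (Multiset.mem_toList.1 h))
    · exact Or.inr (List.eq_of_mem_replicate h)
  have key : ∀ g : (Fin m → ℕ) → ℕ, g 0 = 0 → ∑ s, g (Count s) = (γL.map g).sum := by
    intro g hg
    have h1 : ∑ i : Fin l.length, g (l.get i) = ∑ s : Fin B, g (Count s) := by
      apply Fintype.sum_equiv (finCongr hlen)
      intro i
      rfl
    rw [← h1]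
    have h2 : ∑ i : Fin l.length, g (l.get i) = (l.map g).sum := by
      simpa using Fin.sum_univ_get' l g
    rw [h2, hl, List.map_append, List.sum_append, List.map_replicate,
      List.sum_replicate, hg, smul_zero, add_zero]
    have h3 : γL.map g = ((γL.toList.map g : List ℕ) : Multiset ℕ) := by
      conv_lhs => rw [← Multiset.coe_toList γL]
      rw [Multiset.map_coe]
    rw [h3, Multiset.sum_coe]
  refine ⟨Count, ?_, ?_, ?_, ?_⟩
  · intro s
    rcases hmem s with h | h
    · exact hsat _ h
    · rw [h]; exact selfsat_zero A
  · intro j hj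
    have := key (fun P => P j) rfl
    rw [this]
    exact hLj j hj
  · intro j _
    have := key (fun P => P j) rfl
    rw [this]
    exact hLle j
  · have hg0 : ((∑ j, (0 : Fin m → ℕ) j) - (if (0 : Fin m → ℕ) ≠ 0 then 1 else 0)) = 0 := by
      simp
    rw [key (fun P => (∑ j, P j) - (if P ≠ 0 then 1 else 0)) hg0]
    have hcong : γL.map (fun P => (∑ j, P j) - (if P ≠ 0 then 1 else 0))
        = γL.map (fun P => (∑ j, P j) - 1) := by
      apply Multiset.map_congr rfl
      intro P hP
      have : P ≠ 0 := hne P (Multiset.mem_of_mem_filter hP)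
      simp [this]
    rw [hcong]
    calc (γL.map (fun P => (∑ j, P j) - 1)).sum
        ≤ (γL.map (fun P => (∑ j, P j) - 1)).sum
          + (γN.map (fun P => (∑ j, P j) - 1)).sum := Nat.le_add_right _ _
      _ = merges γ := by rw [merges, ← hsplit, Multiset.map_add, Multiset.sum_add]

/-- Correctness of the IP formulation of StableConfigs for finite TBNs: with
B = ∑_{j limiting} T j polymer slots, the minimum number of merges over saturated
configurations of T equals the minimum of the IP objective over all feasible Count
assignments. -/
theorem stmt12 {m n : ℕ} (A : Matrix (Fin n) (Fin m) ℤ) (T : Fin m → ℕ)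
    (hT : SelfSaturated A T) :
    ∃ N : ℕ,
      IsLeast {k : ℕ | ∃ γ : Multiset (Fin m → ℕ),
        (∀ P ∈ γ, P ≠ 0) ∧ γ.sum = T ∧ (∀ P ∈ γ, SelfSaturated A P) ∧
        merges γ = k} N ∧
      IsLeast {k : ℕ | ∃ Count : Fin (∑ j ∈ limiting A, T j) → Fin m → ℕ,
        (∀ s, SelfSaturated A (Count s)) ∧
        (∀ j ∈ limiting A, (∑ s, Count s j) = T j) ∧
        (∀ j ∉ limiting A, (∑ s, Count s j) ≤ T j) ∧
        (∑ s, ((∑ j, Count s j) - (if Count s ≠ 0 then 1 else 0))) = k} N := by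
  classical
  set S1 : Set ℕ := {k : ℕ | ∃ γ : Multiset (Fin m → ℕ),
      (∀ P ∈ γ, P ≠ 0) ∧ γ.sum = T ∧ (∀ P ∈ γ, SelfSaturated A P) ∧
      merges γ = k} with hS1
  set S2 : Set ℕ := {k : ℕ | ∃ Count : Fin (∑ j ∈ limiting A, T j) → Fin m → ℕ,
      (∀ s, SelfSaturated A (Count s)) ∧
      (∀ j ∈ limiting A, (∑ s, Count s j) = T j) ∧
      (∀ j ∉ limiting A, (∑ s, Count s j) ≤ T j) ∧
      (∑ s, ((∑ j, Count s j) - (if Count s ≠ 0 then 1 else 0))) = k} with hS2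
  have hne1 : S1.Nonempty := by
    by_cases h0 : T = 0
    · refine ⟨0, 0, ?_, ?_, ?_, ?_⟩ <;> simp [merges, h0]
    · exact ⟨merges {T}, {T}, by simpa using h0, by simp, by simpa using hT, rfl⟩
  have hlb2 : ∀ k ∈ S2, sInf S1 ≤ k := by
    intro k hk
    obtain ⟨C, h1, h2, h3, h4⟩ := hk
    obtain ⟨γ, g1, g2, g3, g4⟩ := exists_config A T C h1 h2 h3
    exact Nat.sInf_le ⟨γ, g1, g2, g3, g4.trans h4⟩
  obtain ⟨γ, g1, g2, g3, g4⟩ := Nat.sInf_mem hne1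
  obtain ⟨C, c1, c2, c3, c4⟩ := exists_count A T γ g1 g2 g3
  have hobj : (∑ s, ((∑ j, C s j) - (if C s ≠ 0 then 1 else 0))) ∈ S2 :=
    ⟨C, c1, c2, c3, rfl⟩
  have h5 : sInf S1 ≤ ∑ s, ((∑ j, C s j) - (if C s ≠ 0 then 1 else 0)) := hlb2 _ hobj
  have h6 : (∑ s, ((∑ j, C s j) - (if C s ≠ 0 then 1 else 0))) = sInf S1 :=
    le_antisymm (c4.trans_eq g4) h5
  exact ⟨sInf S1, ⟨Nat.sInf_mem hne1, fun k hk => Nat.sInf_le hk⟩,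
    ⟨C, c1, c2, c3, h6⟩, hlb2⟩
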